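/- Let A be an n×n real matrix and C a p×n real matrix with rank(C) = n. If s̃ is an integer with s̃ ≥ max{1, n − rank(A)} and K̃ is an integer with K̃ ≥ ⌈n/s̃⌉, then there exist subsets S̃_0, …, S̃_{K̃−1} of {1, …, p} with |S̃_k| ≤ s̃ for all k such that the scheduled observability matrix, obtained by vertically stacking the blocks C_{S̃_k} A^k for k = 0, 1, …, K̃−1, has rank n (here C_{S̃_k} denotes the submatrix of C formed by the rows indexed by S̃_k). -/

import Mathlib

open Matrix Module Submodule

lemma map_finrank_ge {V W : Type*} [AddCommGroup V] [Module ℝ V] [AddCommGroup W]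
    [Module ℝ W] [FiniteDimensional ℝ V] (f : V →ₗ[ℝ] W) (U : Submodule ℝ V) :
    finrank ℝ U ≤ finrank ℝ (U.map f) + finrank ℝ (LinearMap.ker f) := by
  have h := LinearMap.finrank_range_add_finrank_ker (f.comp U.subtype)
  rw [LinearMap.range_comp, Submodule.range_subtype] at h
  have hker : finrank ℝ (LinearMap.ker (f.comp U.subtype)) ≤ finrank ℝ (LinearMap.ker f) := by
    have hsub : (LinearMap.ker (f.comp U.subtype)).map U.subtype ≤ LinearMap.ker f := by
      rintro x ⟨y, hy, rfl⟩
      simpa [LinearMap.mem_ker] using hy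
    calc finrank ℝ (LinearMap.ker (f.comp U.subtype))
        = finrank ℝ ((LinearMap.ker (f.comp U.subtype)).map U.subtype) :=
          (Submodule.finrank_map_subtype_eq _ _).symm
      _ ≤ _ := Submodule.finrank_mono hsub
  omega

lemma rank_pow_ge {n : ℕ} (A : Matrix (Fin n) (Fin n) ℝ) (k : ℕ) :
    n ≤ (A ^ k).rank + k * (n - A.rank) := by
  induction k with
  | zero => simp [Matrix.rank_one]
  | succ k ih =>
    have hk : finrank ℝ (LinearMap.ker A.mulVecLin) = n - A.rank := by
      have h := LinearMap.finrank_range_add_finrank_ker A.mulVecLin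
      rw [Module.finrank_fin_fun] at h
      have hr : A.rank = finrank ℝ (LinearMap.range A.mulVecLin) := rfl
      omega
    have hmap := map_finrank_ge A.mulVecLin (LinearMap.range (A ^ k).mulVecLin)
    have he : (LinearMap.range ((A ^ k)).mulVecLin).map A.mulVecLin
        = LinearMap.range ((A ^ (k + 1)).mulVecLin) := by
      rw [pow_succ', Matrix.mulVecLin_mul, LinearMap.range_comp]
    rw [he, hk] at hmap
    have h1 : (A ^ k).rank ≤ (A ^ (k + 1)).rank + (n - A.rank) := hmap
    have h2 : (k + 1) * (n - A.rank) = k * (n - A.rank) + (n - A.rank) := by ring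
    omega

lemma greedy_step {n p : ℕ} (f : Fin p → (Fin n → ℝ)) (U : Submodule ℝ (Fin n → ℝ)) (s : ℕ) :
    ∃ S : Finset (Fin p), S.card ≤ s ∧
      min (finrank ℝ U + s) (finrank ℝ ↥(U ⊔ span ℝ (Set.range f)))
        ≤ finrank ℝ ↥(U ⊔ span ℝ (f '' (S : Set (Fin p)))) := by
  induction s with
  | zero =>
    refine ⟨∅, le_rfl, ?_⟩
    have : U ⊔ span ℝ (f '' ((∅ : Finset (Fin p)) : Set (Fin p))) = U := by simp
    rw [this]
    exact le_trans (min_le_left _ _) (by omega)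
  | succ s ih =>
    obtain ⟨S, hS, hmin⟩ := ih
    by_cases h : finrank ℝ ↥(U ⊔ span ℝ (Set.range f)) ≤ finrank ℝ ↥(U ⊔ span ℝ (f '' (S : Set (Fin p))))
    · exact ⟨S, hS.trans (Nat.le_succ s), le_trans (min_le_right _ _) h⟩
    · push_neg at h
      have hG : finrank ℝ U + s ≤ finrank ℝ ↥(U ⊔ span ℝ (f '' (S : Set (Fin p)))) := by
        rcases le_total (finrank ℝ U + s) (finrank ℝ ↥(U ⊔ span ℝ (Set.range f))) with h' | h'
        · rwa [min_eq_left h'] at hmin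
        · rw [min_eq_right h'] at hmin; omega
      have hex : ∃ i, f i ∉ (U ⊔ span ℝ (f '' (S : Set (Fin p)))) := by
        by_contra hc
        push_neg at hc
        have hle : U ⊔ span ℝ (Set.range f) ≤ U ⊔ span ℝ (f '' (S : Set (Fin p))) :=
          sup_le le_sup_left (span_le.mpr (by rintro x ⟨i, rfl⟩; exact hc i))
        exact absurd (Submodule.finrank_mono hle) (not_le.mpr h)
      obtain ⟨i, hi⟩ := hex
      refine ⟨insert i S, (Finset.card_insert_le _ _).trans (Nat.succ_le_succ hS), ?_⟩
      have heq : U ⊔ span ℝ (f '' ((insert i S : Finset (Fin p)) : Set (Fin p)))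
          = (U ⊔ span ℝ (f '' (S : Set (Fin p)))) ⊔ span ℝ {f i} := by
        rw [Finset.coe_insert, Set.image_insert_eq, Submodule.span_insert,
          sup_comm (span ℝ {f i}) (span ℝ (f '' (S : Set (Fin p)))), ← sup_assoc]
      have hlt : (U ⊔ span ℝ (f '' (S : Set (Fin p)))) < (U ⊔ span ℝ (f '' (S : Set (Fin p)))) ⊔ span ℝ {f i} := by
        refine lt_of_le_of_ne le_sup_left fun hEq => hi ?_
        rw [hEq]
        exact Submodule.mem_sup_right (subset_span (Set.mem_singleton _))
      have hfr := Submodule.finrank_lt_finrank_of_lt hlt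
      rw [heq]
      have := min_le_left (finrank ℝ U + (s + 1)) (finrank ℝ ↥(U ⊔ span ℝ (Set.range f)))
      omega

/-- If `rank C = n`, `s̃ ≥ max {1, n - rank A}`, and `K̃ ≥ ⌈n/s̃⌉`, then there exists a
sensor schedule `S̃_0, ..., S̃_{K̃-1}` with `|S̃_k| ≤ s̃` such that the scheduled
observability matrix, obtained by stacking the blocks `C_{S̃_k} A^k`, has rank `n`. -/
theorem stmt_10 {n p : ℕ} (A : Matrix (Fin n) (Fin n) ℝ) (C : Matrix (Fin p) (Fin n) ℝ)
    (hC : C.rank = n) (st Kt : ℕ) (hst : max 1 (n - A.rank) ≤ st)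
    (hKt : (⌈(n : ℚ) / (st : ℚ)⌉ : ℤ) ≤ (Kt : ℤ)) :
    ∃ St : Fin Kt → Finset (Fin p), (∀ k : Fin Kt, (St k).card ≤ st) ∧
      Matrix.rank (Matrix.of fun (q : Σ k : Fin Kt, {j : Fin p // j ∈ St k}) (i : Fin n) =>
        (C * A ^ ((q.1 : ℕ))) q.2.val i) = n := by
  have hst1 : 1 ≤ st := le_trans (le_max_left _ _) hst
  have hstd : n - A.rank ≤ st := le_trans (le_max_right _ _) hst
  -- n ≤ Kt * st
  have hKtst : n ≤ Kt * st := by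
    have hstQ : (0 : ℚ) < st := by exact_mod_cast hst1
    have h1 : (n : ℚ) / st ≤ ((⌈(n : ℚ) / st⌉ : ℤ) : ℚ) := Int.le_ceil _
    have h2 : ((⌈(n : ℚ) / st⌉ : ℤ) : ℚ) ≤ ((Kt : ℤ) : ℚ) := by exact_mod_cast hKt
    have h3 : (n : ℚ) ≤ (Kt : ℚ) * st := by
      have := h1.trans h2
      rw [div_le_iff₀ hstQ] at this
      push_cast at this ⊢
      linarith
    exact_mod_cast h3
  set rows : ℕ → Fin p → (Fin n → ℝ) := fun k i => (C * A ^ k) i with hrows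
  -- kernel of C is trivial in finrank terms
  have hCk : finrank ℝ (LinearMap.ker C.mulVecLin) = 0 := by
    have h := LinearMap.finrank_range_add_finrank_ker C.mulVecLin
    rw [Module.finrank_fin_fun] at h
    have hr : C.rank = finrank ℝ (LinearMap.range C.mulVecLin) := rfl
    omega
  have hrow : ∀ k : ℕ, n ≤ finrank ℝ (span ℝ (Set.range (rows k))) + k * st := by
    intro k
    have h1 : finrank ℝ (span ℝ (Set.range (rows k))) = (C * A ^ k).rank := by
      rw [Matrix.rank_eq_finrank_span_row]; rfl
    have h2 : (A ^ k).rank ≤ (C * A ^ k).rank := by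
      have hmap := map_finrank_ge C.mulVecLin (LinearMap.range (A ^ k).mulVecLin)
      have he : (LinearMap.range ((A ^ k)).mulVecLin).map C.mulVecLin
          = LinearMap.range ((C * A ^ k).mulVecLin) := by
        rw [Matrix.mulVecLin_mul, LinearMap.range_comp]
      rw [he, hCk] at hmap
      simp at hmap; exact hmap
    have h3 := rank_pow_ge A k
    have h4 : k * (n - A.rank) ≤ k * st := Nat.mul_le_mul_left k hstd
    omega
  -- main downward induction
  have main : ∀ m : ℕ, ∃ St : Fin Kt → Finset (Fin p),
      (∀ k, (St k).card ≤ st) ∧ (∀ k : Fin Kt, (k : ℕ) + m < Kt → St k = ∅) ∧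
      n - (Kt - m) * st ≤
        finrank ℝ ↥(⨆ k : Fin Kt, span ℝ (rows (k : ℕ) '' ((St k : Set (Fin p))))) := by
    intro m
    induction m with
    | zero =>
      refine ⟨fun _ => ∅, fun k => by simp, fun k _ => rfl, ?_⟩
      have h0 : n - (Kt - 0) * st = 0 := by
        simp only [Nat.sub_zero]
        omega
      rw [h0]
      exact Nat.zero_le _
    | succ m ih =>
      obtain ⟨St, h1, h2, h3⟩ := ih
      by_cases hm : Kt ≤ m
      · refine ⟨St, h1, fun k hk => h2 k (by omega), ?_⟩
        have he : Kt - (m + 1) = Kt - m := by omega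
        rw [he]
        exact h3
      · push_neg at hm
        set k0 : Fin Kt := ⟨Kt - 1 - m, by omega⟩ with hk0
        set U := ⨆ k : Fin Kt, span ℝ (rows (k : ℕ) '' ((St k : Set (Fin p)))) with hU
        obtain ⟨S, hScard, hSmin⟩ := greedy_step (rows (k0 : ℕ)) U st
        have hk0v : (k0 : ℕ) = Kt - 1 - m := rfl
        refine ⟨Function.update St k0 S, ?_, ?_, ?_⟩
        · intro k
          by_cases hk : k = k0
          · rw [hk, Function.update_self]; exact hScard
          · rw [Function.update_of_ne hk]; exact h1 k
        · intro k hk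
          have hnv : (k : ℕ) ≠ Kt - 1 - m := by omega
          have hne : k ≠ k0 := fun he => hnv (by rw [he])
          rw [Function.update_of_ne hne]
          exact h2 k (by omega)
        · have hle : U ⊔ span ℝ (rows (k0 : ℕ) '' (S : Set (Fin p))) ≤
              ⨆ k : Fin Kt, span ℝ (rows (k : ℕ) ''
                ((Function.update St k0 S k : Finset (Fin p)) : Set (Fin p))) := by
            refine sup_le (iSup_le fun k => ?_) ?_
            · by_cases hk : k = k0
              · have he : St k = ∅ := h2 k (by rw [hk, hk0v]; omega)
                rw [he]
                simp
              · refine le_trans (le_of_eq ?_) (le_iSup _ k)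
                rw [Function.update_of_ne hk]
            · refine le_trans (le_of_eq ?_) (le_iSup _ k0)
              rw [Function.update_self]
          refine le_trans (le_trans ?_ hSmin) (Submodule.finrank_mono hle)
          have hA := hrow (k0 : ℕ)
          have hB : finrank ℝ (span ℝ (Set.range (rows (k0 : ℕ)))) ≤
              finrank ℝ ↥(U ⊔ span ℝ (Set.range (rows (k0 : ℕ)))) :=
            Submodule.finrank_mono le_sup_right
          have e1 : (Kt - m) * st = (Kt - (m + 1)) * st + st := by
            have : Kt - m = (Kt - (m + 1)) + 1 := by omega
            rw [this]; ring
          have e2 : (k0 : ℕ) * st = (Kt - (m + 1)) * st := by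
            rw [hk0v]
            congr 1
            omega
          refine le_min ?_ ?_
          · rw [e1] at h3
            omega
          · rw [e2] at hA
            omega
  obtain ⟨St, h1, h2, h3⟩ := main Kt
  have hfin : n ≤ finrank ℝ ↥(⨆ k : Fin Kt, span ℝ (rows (k : ℕ) '' ((St k : Set (Fin p))))) := by
    have : Kt - Kt = 0 := by omega
    rw [this] at h3
    simpa using h3
  have hT : (⨆ k : Fin Kt, span ℝ (rows (k : ℕ) '' ((St k : Set (Fin p))))) = ⊤ := by
    apply Submodule.eq_top_of_finrank_eq
    rw [Module.finrank_fin_fun]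
    exact le_antisymm (le_trans (Submodule.finrank_le _) (le_of_eq (Module.finrank_fin_fun ℝ))) hfin
  refine ⟨St, h1, ?_⟩
  rw [Matrix.rank_eq_finrank_span_row]
  have hr : Set.range (Matrix.of fun (q : Σ k : Fin Kt, {j : Fin p // j ∈ St k}) (i : Fin n) =>
        (C * A ^ ((q.1 : ℕ))) q.2.val i).row =
      ⋃ k : Fin Kt, rows (k : ℕ) '' ((St k : Set (Fin p))) := by
    rw [Set.range_sigma_eq_iUnion_range]
    refine Set.iUnion_congr fun k => ?_
    ext x
    constructor
    · rintro ⟨j, rfl⟩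
      exact ⟨j.val, j.property, rfl⟩
    · rintro ⟨j, hj, rfl⟩
      exact ⟨⟨j, hj⟩, rfl⟩
  rw [hr, Submodule.span_iUnion, hT]
  rw [finrank_top, Module.finrank_fin_fun]
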